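/- For any μ₁, μ₂ > 0, Δ_OMA = 1/μ₁ + 1/μ₂ + (1/μ₁)/(1+μ₁/μ₂) + (1/μ₂)/(1+μ₂/μ₁) satisfies 3/2 · (1/μ₁ + 1/μ₂) ≤ Δ_OMA < 2(1/μ₁ + 1/μ₂), with the lower bound attained iff μ₁ = μ₂. -/
import Mathlib

theorem oma_age_bounds (μ₁ μ₂ : ℝ) (h₁ : 0 < μ₁) (h₂ : 0 < μ₂) :
    (3/2 * (1/μ₁ + 1/μ₂) ≤ 1/μ₁ + 1/μ₂ + (1/μ₁)/(1 + μ₁/μ₂) + (1/μ₂)/(1 + μ₂/μ₁)) ∧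
    (1/μ₁ + 1/μ₂ + (1/μ₁)/(1 + μ₁/μ₂) + (1/μ₂)/(1 + μ₂/μ₁) < 2 * (1/μ₁ + 1/μ₂)) ∧
    (3/2 * (1/μ₁ + 1/μ₂) = 1/μ₁ + 1/μ₂ + (1/μ₁)/(1 + μ₁/μ₂) + (1/μ₂)/(1 + μ₂/μ₁)
      ↔ μ₁ = μ₂) := by
  have hs : 0 < μ₁ + μ₂ := by linarith
  have h1 : (0:ℝ) < 1 + μ₁/μ₂ := by positivity
  have h2 : (0:ℝ) < 1 + μ₂/μ₁ := by positivity
  have key : 1/μ₁ + 1/μ₂ + (1/μ₁)/(1 + μ₁/μ₂) + (1/μ₂)/(1 + μ₂/μ₁)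
      - 3/2 * (1/μ₁ + 1/μ₂) = (μ₁ - μ₂)^2 / (2 * μ₁ * μ₂ * (μ₁ + μ₂)) := by
    field_simp
    ring
  have key2 : 2 * (1/μ₁ + 1/μ₂) - (1/μ₁ + 1/μ₂ + (1/μ₁)/(1 + μ₁/μ₂) + (1/μ₂)/(1 + μ₂/μ₁))
      = 2 / (μ₁ + μ₂) := by
    field_simp
    ring
  refine ⟨by nlinarith [key, div_nonneg (sq_nonneg (μ₁ - μ₂)) (le_of_lt (by positivity : (0:ℝ) < 2 * μ₁ * μ₂ * (μ₁ + μ₂)))],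
    by nlinarith [key2, div_pos (by norm_num : (0:ℝ) < 2) hs], ?_⟩
  constructor
  · intro h
    have : (μ₁ - μ₂)^2 / (2 * μ₁ * μ₂ * (μ₁ + μ₂)) = 0 := by linarith [key]
    have hd : (0:ℝ) < 2 * μ₁ * μ₂ * (μ₁ + μ₂) := by positivity
    have h0 : (μ₁ - μ₂)^2 = 0 := by
      rcases div_eq_zero_iff.mp this with h | h
      · exact h
      · linarith
    have := sq_eq_zero_iff.mp h0
    linarith
  · rintro rfl
    rw [eq_comm, ← sub_eq_zero, key]
    simp
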